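/- arXiv:1807.05438 — 2 statements merged into one kernel-verified Lean document; each statement's English description precedes it below -/
import Mathlib

section
/- For any measurable function z : ℝ → ℝ with z and its derivative z' square-integrable on (-∞, x], one has |z(x)| ≤ √2 · ‖z‖_{L²((-∞,x])}^{1/2} · ‖z'‖_{L²((-∞,x])}^{1/2}. -/
open MeasureTheory Set

/-- Agmon-type interpolation inequality on the half-line `(-∞, x]`:
`|z(x)| ≤ √2 ‖z‖_{L²((-∞,x])}^{1/2} ‖z'‖_{L²((-∞,x])}^{1/2}`. -/
theorem agmon_halfline (z : ℝ → ℝ) (x : ℝ)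
    (hz : ContDiff ℝ 1 z)
    (hz2 : IntegrableOn (fun t => z t ^ 2) (Iic x))
    (hz'2 : IntegrableOn (fun t => deriv z t ^ 2) (Iic x)) :
    |z x| ≤ Real.sqrt 2 * (∫ t in Iic x, z t ^ 2) ^ ((1:ℝ)/4) *
      (∫ t in Iic x, deriv z t ^ 2) ^ ((1:ℝ)/4) := by
  have hzc : Continuous z := hz.continuous
  have hz'c : Continuous (deriv z) := hz.continuous_deriv le_rfl
  have hzd : Differentiable ℝ z := hz.differentiable one_ne_zero
  -- derivative of z²
  have hderiv : ∀ t : ℝ, HasDerivAt (fun s => z s ^ 2) (2 * z t * deriv z t) t := by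
    intro t
    have h := ((hzd t).hasDerivAt).fun_pow 2
    simpa [mul_comm, mul_assoc, mul_left_comm] using h
  -- integrability of 2 z z' on Iic x
  have hint : IntegrableOn (fun t => 2 * z t * deriv z t) (Iic x) := by
    refine Integrable.mono (hz2.add hz'2) ?_ ?_
    · exact ((continuous_const.mul hzc).mul hz'c).aestronglyMeasurable
    · refine Filter.Eventually.of_forall fun t => ?_
      have h1 : 2 * |z t| * |deriv z t| ≤ |z t| ^ 2 + |deriv z t| ^ 2 := by
        nlinarith [sq_nonneg (|z t| - |deriv z t|)]
      have h2 : z t ^ 2 + deriv z t ^ 2 ≥ 0 := by positivity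
      simp only [Real.norm_eq_abs, abs_mul, abs_two]
      simp only [Pi.add_apply]
      rw [abs_of_nonneg h2]
      calc 2 * |z t| * |deriv z t| ≤ |z t| ^ 2 + |deriv z t| ^ 2 := h1
        _ = z t ^ 2 + deriv z t ^ 2 := by rw [sq_abs, sq_abs]
  -- FTC on [y, x]
  have hftc : ∀ y : ℝ, (∫ t in y..x, 2 * z t * deriv z t) = z x ^ 2 - z y ^ 2 := by
    intro y
    exact intervalIntegral.integral_eq_sub_of_hasDerivAt
      (fun t _ => hderiv t)
      (((continuous_const.mul hzc).mul hz'c).intervalIntegrable y x)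
  have htend := intervalIntegral_tendsto_integral_Iic x hint Filter.tendsto_id
  set I : ℝ := ∫ t in Iic x, 2 * z t * deriv z t with hI
  -- z y ^ 2 tends to z x ^ 2 - I
  have htend2 : Filter.Tendsto (fun y => z y ^ 2) Filter.atBot (nhds (z x ^ 2 - I)) := by
    have : (fun y => z y ^ 2) = fun y => z x ^ 2 - ∫ t in y..x, 2 * z t * deriv z t := by
      funext y; rw [hftc y]; ring
    rw [this]
    exact (tendsto_const_nhds.sub htend)
  set L : ℝ := z x ^ 2 - I with hL
  have hL0 : 0 ≤ L := ge_of_tendsto' htend2 fun y => sq_nonneg _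
  -- L = 0
  have hLz : L = 0 := by
    by_contra h
    have hLpos : 0 < L := lt_of_le_of_ne hL0 (Ne.symm h)
    have hev : ∀ᶠ y in Filter.atBot, L / 2 ≤ z y ^ 2 := by
      exact htend2.eventually (eventually_ge_nhds (show L / 2 < L by linarith))
    obtain ⟨a, ha⟩ := Filter.eventually_atBot.mp hev
    set b : ℝ := min a x with hb
    have hsub : Iic b ⊆ Iic x := Iic_subset_Iic.mpr (min_le_right a x)
    have hz2b : IntegrableOn (fun t => z t ^ 2) (Iic b) := hz2.mono_set hsub
    have hconst : IntegrableOn (fun _ : ℝ => L / 2) (Iic b) := by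
      refine hz2b.mono' aestronglyMeasurable_const ?_
      refine (ae_restrict_iff' measurableSet_Iic).mpr ?_
      refine Filter.Eventually.of_forall fun t ht => ?_
      have : L / 2 ≤ z t ^ 2 := ha t (le_trans ht (min_le_left a x))
      rw [Real.norm_eq_abs, abs_of_nonneg (by linarith : (0:ℝ) ≤ L / 2)]
      exact this
    have := (integrable_const_iff).mp hconst
    rcases this with h1 | h2
    · exact absurd h1 (by positivity)
    · have h2 := h2.measure_univ_lt_top
      rw [Measure.restrict_apply_univ] at h2
      simp [Real.volume_Iic] at h2
  -- so z x ^ 2 = I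
  have hsq : z x ^ 2 = I := by linarith [hL.symm ▸ hLz]
  -- Cauchy-Schwarz
  set A : ℝ := ∫ t in Iic x, z t ^ 2 with hA
  set B : ℝ := ∫ t in Iic x, deriv z t ^ 2 with hB
  have hA0 : 0 ≤ A := integral_nonneg fun t => sq_nonneg _
  have hB0 : 0 ≤ B := integral_nonneg fun t => sq_nonneg _
  have hmemz : MemLp z 2 (volume.restrict (Iic x)) :=
    (memLp_two_iff_integrable_sq hzc.aestronglyMeasurable.restrict).mpr hz2
  have hmemz' : MemLp (deriv z) 2 (volume.restrict (Iic x)) :=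
    (memLp_two_iff_integrable_sq hz'c.aestronglyMeasurable.restrict).mpr hz'2
  have hCS : (∫ t in Iic x, ‖z t‖ * ‖deriv z t‖) ≤ A ^ ((1:ℝ)/2) * B ^ ((1:ℝ)/2) := by
    have h2e : (2 : ENNReal) = ENNReal.ofReal (2:ℝ) := by
      rw [ENNReal.ofReal_ofNat]
    have h0 := MeasureTheory.integral_mul_norm_le_Lp_mul_Lq (μ := volume.restrict (Iic x))
      (p := 2) (q := 2) ⟨by norm_num, by norm_num, by norm_num⟩ (h2e ▸ hmemz) (h2e ▸ hmemz')
    have e1 : (∫ t in Iic x, ‖z t‖ ^ (2:ℝ)) = A := by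
      rw [hA]; refine integral_congr_ae (Filter.Eventually.of_forall fun t => ?_)
      simp [Real.rpow_two, sq_abs]
    have e2 : (∫ t in Iic x, ‖deriv z t‖ ^ (2:ℝ)) = B := by
      rw [hB]; refine integral_congr_ae (Filter.Eventually.of_forall fun t => ?_)
      simp [Real.rpow_two, sq_abs]
    rw [e1, e2] at h0
    simpa using h0
  have hIle : I ≤ 2 * (A ^ ((1:ℝ)/2) * B ^ ((1:ℝ)/2)) := by
    have h1 : I = 2 * ∫ t in Iic x, z t * deriv z t := by
      rw [hI, ← integral_const_mul]
      congr 1; funext t; ring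
    have hintzz : IntegrableOn (fun t => z t * deriv z t) (Iic x) := by
      refine Integrable.mono hint (hzc.mul hz'c).aestronglyMeasurable.restrict ?_
      refine Filter.Eventually.of_forall fun t => ?_
      simp only [Real.norm_eq_abs, abs_mul, abs_two]
      nlinarith [abs_nonneg (z t), abs_nonneg (deriv z t)]
    have hintn : IntegrableOn (fun t => ‖z t‖ * ‖deriv z t‖) (Iic x) := by
      refine hintzz.abs.congr (Filter.Eventually.of_forall fun t => ?_)
      simp [abs_mul]
    have h2 : (∫ t in Iic x, z t * deriv z t) ≤ ∫ t in Iic x, ‖z t‖ * ‖deriv z t‖ := by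
      refine integral_mono hintzz hintn fun t => ?_
      calc z t * deriv z t ≤ |z t * deriv z t| := le_abs_self _
        _ = ‖z t‖ * ‖deriv z t‖ := by simp [abs_mul]
    linarith [h1 ▸ (by linarith : (2:ℝ) * ∫ t in Iic x, z t * deriv z t ≤ 2 * ∫ t in Iic x, ‖z t‖ * ‖deriv z t‖)]
  -- conclude
  have hfinal : z x ^ 2 ≤ 2 * (A ^ ((1:ℝ)/2) * B ^ ((1:ℝ)/2)) := hsq ▸ hIle
  have habs : |z x| = Real.sqrt (z x ^ 2) := (Real.sqrt_sq_eq_abs _).symm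
  rw [habs]
  calc Real.sqrt (z x ^ 2) ≤ Real.sqrt (2 * (A ^ ((1:ℝ)/2) * B ^ ((1:ℝ)/2))) :=
        Real.sqrt_le_sqrt hfinal
    _ = Real.sqrt 2 * A ^ ((1:ℝ)/4) * B ^ ((1:ℝ)/4) := by
        rw [Real.sqrt_mul (by norm_num), Real.sqrt_mul (Real.rpow_nonneg hA0 _),
          Real.sqrt_eq_rpow (A ^ ((1:ℝ)/2)), Real.sqrt_eq_rpow (B ^ ((1:ℝ)/2)),
          ← Real.rpow_mul hA0, ← Real.rpow_mul hB0]
        norm_num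
        ring
end

section
/- Let u₂ : ℝ → ℝ be integrable with u₂ > 0 a.e., let b₁, b₂ ∈ ℝ, and suppose ∫_{−∞}^{b₁} u₁(x) dx = ∫_{−∞}^{b₂} u₂(x) dx for an integrable u₁. Then ‖(𝟙_{(-∞,b₁]} − 𝟙_{(-∞,b₂]}) u₂‖_{L¹(ℝ)} = −sign(b₁ − b₂) · ∫_{−∞}^{b₁} (u₁(x) − u₂(x)) dx ≤ ‖𝟙_{(-∞,b₁]}(u₁ − u₂)‖_{L¹(ℝ)}. -/
open MeasureTheory Set

lemma barrier_aux (u₂ : ℝ → ℝ) (b₁ b₂ : ℝ) (h : b₁ ≤ b₂)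
    (hu₂int : Integrable u₂)
    (hu₂pos : ∀ᵐ x ∂(volume : Measure ℝ), 0 < u₂ x) :
    (∫ x, |indicator (Iic b₁) u₂ x - indicator (Iic b₂) u₂ x|) =
      (∫ x in Iic b₂, u₂ x) - ∫ x in Iic b₁, u₂ x := by
  have hpt : ∀ x, |indicator (Iic b₁) u₂ x - indicator (Iic b₂) u₂ x| =
      indicator (Ioc b₁ b₂) (fun x => |u₂ x|) x := by
    intro x
    by_cases h1 : x ≤ b₁
    · simp [indicator_of_mem (mem_Iic.2 h1), indicator_of_mem (mem_Iic.2 (h1.trans h)),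
        indicator_of_notMem (fun (hx : x ∈ Ioc b₁ b₂) => absurd hx.1 (not_lt.2 h1))]
    · push_neg at h1
      by_cases h2 : x ≤ b₂
      · simp [indicator_of_notMem (fun hx => absurd (mem_Iic.1 hx) (not_le.2 h1)),
          indicator_of_mem (mem_Iic.2 h2), indicator_of_mem (mem_Ioc.2 ⟨h1, h2⟩), abs_sub_comm]
      · push_neg at h2
        simp [indicator_of_notMem (fun hx => absurd (mem_Iic.1 hx) (not_le.2 h1)),
          indicator_of_notMem (fun hx => absurd (mem_Iic.1 hx) (not_le.2 h2)),
          indicator_of_notMem (fun (hx : x ∈ Ioc b₁ b₂) => absurd hx.2 (not_le.2 h2))]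
  have habs : (fun x => |u₂ x|) =ᵐ[(volume : Measure ℝ)] u₂ :=
    hu₂pos.mono fun x hx => abs_of_pos hx
  calc (∫ x, |indicator (Iic b₁) u₂ x - indicator (Iic b₂) u₂ x|)
      = ∫ x, indicator (Ioc b₁ b₂) (fun x => |u₂ x|) x := by
        exact integral_congr_ae (Filter.Eventually.of_forall hpt)
    _ = ∫ x in Ioc b₁ b₂, |u₂ x| := integral_indicator measurableSet_Ioc
    _ = ∫ x in Ioc b₁ b₂, u₂ x := integral_congr_ae (ae_restrict_of_ae habs)
    _ = ∫ x in b₁..b₂, u₂ x := (intervalIntegral.integral_of_le h).symm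
    _ = (∫ x in Iic b₂, u₂ x) - ∫ x in Iic b₁, u₂ x :=
        (intervalIntegral.integral_Iic_sub_Iic hu₂int.integrableOn hu₂int.integrableOn).symm

/-- Key identity for uniqueness: if `∫_{−∞}^{b₁} u₁ = ∫_{−∞}^{b₂} u₂` with
`u₂ > 0` a.e., then
`‖(𝟙_{(-∞,b₁]} − 𝟙_{(-∞,b₂]}) u₂‖_{L¹} = −sign(b₁−b₂) ∫_{−∞}^{b₁} (u₁ − u₂)`
and this is bounded by `‖𝟙_{(-∞,b₁]}(u₁ − u₂)‖_{L¹}`. -/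
theorem barrier_difference_identity
    (u₁ u₂ : ℝ → ℝ) (b₁ b₂ : ℝ)
    (hu₁int : Integrable u₁) (hu₂int : Integrable u₂)
    (hu₂pos : ∀ᵐ x ∂(volume : Measure ℝ), 0 < u₂ x)
    (hmass : (∫ x in Iic b₁, u₁ x) = ∫ x in Iic b₂, u₂ x) :
    (∫ x, |indicator (Iic b₁) u₂ x - indicator (Iic b₂) u₂ x|) =
        -(Real.sign (b₁ - b₂)) * ∫ x in Iic b₁, (u₁ x - u₂ x) ∧
    (∫ x, |indicator (Iic b₁) u₂ x - indicator (Iic b₂) u₂ x|) ≤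
        ∫ x in Iic b₁, |u₁ x - u₂ x| := by
  have hJ : (∫ x in Iic b₁, (u₁ x - u₂ x)) =
      (∫ x in Iic b₂, u₂ x) - ∫ x in Iic b₁, u₂ x := by
    rw [integral_sub hu₁int.integrableOn hu₂int.integrableOn, hmass]
  have key : (∫ x, |indicator (Iic b₁) u₂ x - indicator (Iic b₂) u₂ x|) =
      -(Real.sign (b₁ - b₂)) * ∫ x in Iic b₁, (u₁ x - u₂ x) := by
    rcases lt_trichotomy b₁ b₂ with h | h | h
    · rw [barrier_aux u₂ b₁ b₂ h.le hu₂int hu₂pos, hJ,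
        Real.sign_of_neg (by linarith : b₁ - b₂ < 0)]
      ring
    · subst h
      rw [hJ]
      simp
    · have := barrier_aux u₂ b₂ b₁ h.le hu₂int hu₂pos
      simp only [abs_sub_comm (indicator (Iic b₂) u₂ _)] at this
      rw [this, hJ, Real.sign_of_pos (by linarith : 0 < b₁ - b₂)]
      ring
  refine ⟨key, ?_⟩
  rw [key]
  calc -(Real.sign (b₁ - b₂)) * ∫ x in Iic b₁, (u₁ x - u₂ x)
      ≤ |(-(Real.sign (b₁ - b₂)) * ∫ x in Iic b₁, (u₁ x - u₂ x))| := le_abs_self _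
    _ ≤ |∫ x in Iic b₁, (u₁ x - u₂ x)| := by
        rw [abs_mul, abs_neg]
        have : |Real.sign (b₁ - b₂)| ≤ 1 := by
          rcases Real.sign_apply_eq (b₁ - b₂) with h | h | h <;> rw [h] <;> norm_num
        nlinarith [abs_nonneg (∫ x in Iic b₁, (u₁ x - u₂ x))]
    _ ≤ ∫ x in Iic b₁, |u₁ x - u₂ x| := by
        simpa [Real.norm_eq_abs] using
          norm_integral_le_integral_norm (μ := volume.restrict (Iic b₁))
            (f := fun x => u₁ x - u₂ x)
end
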